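/- arXiv:1410.8774 — 3 statements merged into one kernel-verified Lean document; each statement's English description precedes it below -/
import Mathlib

section
/- Let G be a finite connected bipartite S_{1,1,3}-free graph and let T be an inclusionwise maximal induced copy of T_k in G with k ≥ 3, with centre u, A_0 the neighbours of u in T, B_0 the leaves of T, B_1 = N(B_0)\A_0, A_1 = N(A_0)\({u} ∪ B_0), C = N(u)\(A_0 ∪ B_1), D_1 = N(A_1)\(C ∪ A_0 ∪ B_1), and D_2 = N(B_1)\({u} ∪ B_0 ∪ A_1). Then every vertex of G belongs to {u} ∪ A_0 ∪ A_1 ∪ B_0 ∪ B_1 ∪ C ∪ D_1 ∪ D_2. -/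
open SimpleGraph

/-- `S` is an independent set in `G`: pairwise non-adjacent vertices. -/
def IndepOn {V : Type*} (G : SimpleGraph V) (S : Set V) : Prop :=
  S.Pairwise fun u v => ¬ G.Adj u v

/-- `NSet G U` is the set of vertices adjacent to at least one vertex of `U`. -/
def NSet {V : Type*} (G : SimpleGraph V) (U : Set V) : Set V :=
  {v | ∃ u ∈ U, G.Adj u v}

/-- `(W, B)` is a bipartition of `G` into two independent parts covering all vertices. -/
def IsBipartition {V : Type*} (G : SimpleGraph V) (W B : Set V) : Prop :=
  W ∪ B = Set.univ ∧ Disjoint W B ∧ IndepOn G W ∧ IndepOn G B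

/-- A bipartite graph `G` with parts `W` and `B` is irreducible if
(a) `|W| = |B| - 1`, (b) every nonempty `A ⊆ W` satisfies `|A| < |N(A) ∩ B|`,
and (c) `G` is connected. -/
def IrreducibleBip {V : Type*} (G : SimpleGraph V) (W B : Set V) : Prop :=
  IsBipartition G W B ∧
  W.ncard + 1 = B.ncard ∧
  (∀ A ⊆ W, A.Nonempty → A.ncard < (NSet G A ∩ B).ncard) ∧
  G.Connected

/-- The simple tree `T_k`: the star `K_{1,k}` with each edge subdivided once.
Vertex `0` is the centre, vertices `1,…,k` are the subdivision vertices `a_i`,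
and vertices `k+1,…,2k` are the leaves `b_i = i + k`. -/
def simpleTree (k : ℕ) : SimpleGraph (Fin (2 * k + 1)) :=
  SimpleGraph.fromRel fun i j =>
    (i.val = 0 ∧ 1 ≤ j.val ∧ j.val ≤ k) ∨ (1 ≤ i.val ∧ i.val ≤ k ∧ j.val = i.val + k)

/-- The tree `S_{1,1,3}`: three leaves at distances 1, 1, 3 from the unique degree-3
vertex `0`. Edges: 0-1, 0-2, 0-3, 3-4, 4-5. -/
def S113 : SimpleGraph (Fin 6) :=
  SimpleGraph.fromRel fun i j =>
    (i = 0 ∧ j = 1) ∨ (i = 0 ∧ j = 2) ∨ (i = 0 ∧ j = 3) ∨ (i = 3 ∧ j = 4) ∨ (i = 4 ∧ j = 5)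

/-- The claw `K_{1,3}`-freeness. -/
def ClawFree {V : Type*} (G : SimpleGraph V) : Prop :=
  IsEmpty (completeBipartiteGraph (Fin 1) (Fin 3) ↪g G)

/-- `(u, a, b)` is an induced copy of the simple tree `T_k` in `G`: `u` is the centre,
`a i` are the neighbours of `u`, `b i` are the leaves with `a i` adjacent to `b i`,
all vertices are distinct, and there are no other adjacencies among these vertices. -/
def IsSimpleTreeCopy {V : Type*} (G : SimpleGraph V) (k : ℕ) (u : V)
    (a b : Fin k → V) : Prop :=
  Function.Injective a ∧ Function.Injective b ∧
  (∀ i, a i ≠ u) ∧ (∀ i, b i ≠ u) ∧ (∀ i j, a i ≠ b j) ∧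
  (∀ i, G.Adj u (a i)) ∧ (∀ i, G.Adj (a i) (b i)) ∧
  (∀ i, ¬ G.Adj u (b i)) ∧
  (∀ i j, i ≠ j → ¬ G.Adj (a i) (a j)) ∧
  (∀ i j, i ≠ j → ¬ G.Adj (b i) (b j)) ∧
  (∀ i j, i ≠ j → ¬ G.Adj (a i) (b j))

/-- The vertex set of the tree copy `(u, a, b)`. -/
def treeVerts {V : Type*} (k : ℕ) (u : V) (a b : Fin k → V) : Set V :=
  {u} ∪ Set.range a ∪ Set.range b

/-- The copy `(u, a, b)` of `T_k` is inclusionwise maximal among induced copies of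
simple trees in `G`. -/
def MaximalSimpleTreeCopy {V : Type*} (G : SimpleGraph V) (k : ℕ) (u : V)
    (a b : Fin k → V) : Prop :=
  IsSimpleTreeCopy G k u a b ∧
  ∀ (m : ℕ) (u' : V) (a' b' : Fin m → V), IsSimpleTreeCopy G m u' a' b' →
    treeVerts k u a b ⊆ treeVerts m u' a' b' →
    treeVerts k u a b = treeVerts m u' a' b'

set_option maxRecDepth 10000 in
set_option maxHeartbeats 2000000 in
lemma no_S113_copy {V : Type} {G : SimpleGraph V} (hfree : IsEmpty (S113 ↪g G))
    {v0 v1 v2 v3 v4 v5 : V}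
    (h01 : G.Adj v0 v1) (h02 : G.Adj v0 v2) (h03 : G.Adj v0 v3)
    (h34 : G.Adj v3 v4) (h45 : G.Adj v4 v5)
    (n12 : ¬ G.Adj v1 v2) (n13 : ¬ G.Adj v1 v3) (n14 : ¬ G.Adj v1 v4)
    (n15 : ¬ G.Adj v1 v5) (n23 : ¬ G.Adj v2 v3) (n24 : ¬ G.Adj v2 v4)
    (n25 : ¬ G.Adj v2 v5) (n04 : ¬ G.Adj v0 v4) (n05 : ¬ G.Adj v0 v5)
    (n35 : ¬ G.Adj v3 v5)
    (d12 : v1 ≠ v2) (d13 : v1 ≠ v3) (d14 : v1 ≠ v4) (d15 : v1 ≠ v5)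
    (d23 : v2 ≠ v3) (d24 : v2 ≠ v4) (d25 : v2 ≠ v5)
    (d04 : v0 ≠ v4) (d05 : v0 ≠ v5) (d35 : v3 ≠ v5) : False := by
  have d01 := h01.ne
  have d02 := h02.ne
  have d03 := h03.ne
  have d34 := h34.ne
  have d45 := h45.ne
  have h10 := h01.symm
  have h20 := h02.symm
  have h30 := h03.symm
  have h43 := h34.symm
  have h54 := h45.symm
  have n21 : ¬ G.Adj v2 v1 := fun h => n12 h.symm
  have n31 : ¬ G.Adj v3 v1 := fun h => n13 h.symm
  have n41 : ¬ G.Adj v4 v1 := fun h => n14 h.symm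
  have n51 : ¬ G.Adj v5 v1 := fun h => n15 h.symm
  have n32 : ¬ G.Adj v3 v2 := fun h => n23 h.symm
  have n42 : ¬ G.Adj v4 v2 := fun h => n24 h.symm
  have n52 : ¬ G.Adj v5 v2 := fun h => n25 h.symm
  have n40 : ¬ G.Adj v4 v0 := fun h => n04 h.symm
  have n50 : ¬ G.Adj v5 v0 := fun h => n05 h.symm
  have n53 : ¬ G.Adj v5 v3 := fun h => n35 h.symm
  have l0 : ¬ G.Adj v0 v0 := G.loopless.irrefl _
  have l1 : ¬ G.Adj v1 v1 := G.loopless.irrefl _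
  have l2 : ¬ G.Adj v2 v2 := G.loopless.irrefl _
  have l3 : ¬ G.Adj v3 v3 := G.loopless.irrefl _
  have l4 : ¬ G.Adj v4 v4 := G.loopless.irrefl _
  have l5 : ¬ G.Adj v5 v5 := G.loopless.irrefl _
  apply hfree.false
  refine ⟨⟨![v0,v1,v2,v3,v4,v5], ?_⟩, ?_⟩
  · unfold Function.Injective
    simp only [Fin.forall_fin_succ, IsEmpty.forall_iff, Matrix.cons_val_zero,
      Matrix.cons_val_succ, Fin.succ_zero_eq_one, implies_true, and_true, true_and]
    tauto
  · suffices h : ∀ i j : Fin 6,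
        G.Adj (![v0,v1,v2,v3,v4,v5] i) (![v0,v1,v2,v3,v4,v5] j) ↔ S113.Adj i j by
      exact fun {i j} => h i j
    simp only [Fin.forall_fin_succ, IsEmpty.forall_iff, Matrix.cons_val_zero,
      Matrix.cons_val_succ, Fin.succ_zero_eq_one, implies_true, and_true, true_and, S113,
      SimpleGraph.fromRel_adj]
    norm_num [Fin.ext_iff]
    tauto

lemma extend_tree_contra {V : Type} {G : SimpleGraph V} {k : ℕ} {u c w : V} {a b : Fin k → V}
    (hmax : MaximalSimpleTreeCopy G k u a b)
    (huc : G.Adj u c) (hcw : G.Adj c w)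
    (hcA : ∀ i, c ≠ a i) (hcB : ∀ i, c ≠ b i)
    (hwA : ∀ i, w ≠ a i) (hwB : ∀ i, w ≠ b i) (hwu : w ≠ u)
    (hca : ∀ i, ¬ G.Adj c (a i)) (hcb : ∀ i, ¬ G.Adj c (b i))
    (huw : ¬ G.Adj u w) (hwa : ∀ i, ¬ G.Adj w (a i)) (hwb : ∀ i, ¬ G.Adj w (b i)) :
    False := by
  obtain ⟨⟨hainj, hbinj, hanu, hbnu, hab, huA, hAB, hnub, hnaa, hnbb, hnab⟩, hm⟩ := hmax
  let a' : Fin (k+1) → V := Fin.snoc a c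
  let b' : Fin (k+1) → V := Fin.snoc b w
  have hac : ∀ i : Fin k, a' i.castSucc = a i := fun i => Fin.snoc_castSucc (α := fun _ => V) c a i
  have hal : a' (Fin.last k) = c := Fin.snoc_last (α := fun _ => V) ..
  have hbc : ∀ i : Fin k, b' i.castSucc = b i := fun i => Fin.snoc_castSucc (α := fun _ => V) w b i
  have hbl : b' (Fin.last k) = w := Fin.snoc_last (α := fun _ => V) ..
  have hcopy : IsSimpleTreeCopy G (k+1) u a' b' := by
    refine ⟨?_, ?_, ?_, ?_, ?_, ?_, ?_, ?_, ?_, ?_, ?_⟩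
    · intro i j hij
      induction i using Fin.lastCases with
      | last =>
        induction j using Fin.lastCases with
        | last => rfl
        | cast j => rw [hal, hac] at hij; exact absurd hij (hcA j)
      | cast i =>
        induction j using Fin.lastCases with
        | last => rw [hal, hac] at hij; exact absurd hij.symm (hcA i)
        | cast j => rw [hac, hac] at hij; exact congrArg Fin.castSucc (hainj hij)
    · intro i j hij
      induction i using Fin.lastCases with
      | last =>
        induction j using Fin.lastCases with
        | last => rfl
        | cast j => rw [hbl, hbc] at hij; exact absurd hij (hwB j)
      | cast i =>
        induction j using Fin.lastCases with
        | last => rw [hbl, hbc] at hij; exact absurd hij.symm (hwB i)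
        | cast j => rw [hbc, hbc] at hij; exact congrArg Fin.castSucc (hbinj hij)
    · intro i
      induction i using Fin.lastCases with
      | last => rw [hal]; exact huc.ne'
      | cast i => rw [hac]; exact hanu i
    · intro i
      induction i using Fin.lastCases with
      | last => rw [hbl]; exact hwu
      | cast i => rw [hbc]; exact hbnu i
    · intro i j
      induction i using Fin.lastCases with
      | last =>
        induction j using Fin.lastCases with
        | last => rw [hal, hbl]; exact hcw.ne
        | cast j => rw [hal, hbc]; exact hcB j
      | cast i =>
        induction j using Fin.lastCases with
        | last => rw [hac, hbl]; exact fun h => hwA i h.symm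
        | cast j => rw [hac, hbc]; exact hab i j
    · intro i
      induction i using Fin.lastCases with
      | last => rw [hal]; exact huc
      | cast i => rw [hac]; exact huA i
    · intro i
      induction i using Fin.lastCases with
      | last => rw [hal, hbl]; exact hcw
      | cast i => rw [hac, hbc]; exact hAB i
    · intro i
      induction i using Fin.lastCases with
      | last => rw [hbl]; exact huw
      | cast i => rw [hbc]; exact hnub i
    · intro i j hij
      induction i using Fin.lastCases with
      | last =>
        induction j using Fin.lastCases with
        | last => exact absurd rfl hij
        | cast j => rw [hal, hac]; exact hca j
      | cast i =>
        induction j using Fin.lastCases with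
        | last => rw [hal, hac]; exact fun h => hca i h.symm
        | cast j =>
          rw [hac, hac]
          exact hnaa i j (fun h => hij (congrArg Fin.castSucc h))
    · intro i j hij
      induction i using Fin.lastCases with
      | last =>
        induction j using Fin.lastCases with
        | last => exact absurd rfl hij
        | cast j => rw [hbl, hbc]; exact hwb j
      | cast i =>
        induction j using Fin.lastCases with
        | last => rw [hbl, hbc]; exact fun h => hwb i h.symm
        | cast j =>
          rw [hbc, hbc]
          exact hnbb i j (fun h => hij (congrArg Fin.castSucc h))
    · intro i j hij
      induction i using Fin.lastCases with
      | last =>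
        induction j using Fin.lastCases with
        | last => exact absurd rfl hij
        | cast j => rw [hal, hbc]; exact hcb j
      | cast i =>
        induction j using Fin.lastCases with
        | last => rw [hac, hbl]; exact fun h => hwa i h.symm
        | cast j =>
          rw [hac, hbc]
          exact hnab i j (fun h => hij (congrArg Fin.castSucc h))
  have hsub : treeVerts k u a b ⊆ treeVerts (k+1) u a' b' := by
    rintro x ((hx | ⟨i, rfl⟩) | ⟨i, rfl⟩)
    · exact Or.inl (Or.inl hx)
    · exact Or.inl (Or.inr ⟨i.castSucc, hac i⟩)
    · exact Or.inr ⟨i.castSucc, hbc i⟩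
  have heq := hm (k+1) u a' b' hcopy hsub
  have hw : w ∈ treeVerts (k+1) u a' b' := Or.inr ⟨Fin.last k, hbl⟩
  rw [← heq] at hw
  rcases hw with (hw | ⟨i, hi⟩) | ⟨i, hi⟩
  · exact hwu hw
  · exact hwA i hi.symm
  · exact hwB i hi.symm

set_option maxHeartbeats 4000000 in
set_option maxRecDepth 10000 in
theorem statement11_aux {V : Type} (G : SimpleGraph V)
    (hbip : ∃ Wp Bp : Set V, IsBipartition G Wp Bp)
    (hconn : G.Connected)
    (hfree : IsEmpty (S113 ↪g G))
    (k : ℕ) (hk : 3 ≤ k) (u : V) (a b : Fin k → V)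
    (hmax : MaximalSimpleTreeCopy G k u a b) :
    ∀ v : V, v ∈ ({u} : Set V) ∪ Set.range a
        ∪ (NSet G (Set.range a) \ ({u} ∪ Set.range b))
        ∪ Set.range b
        ∪ (NSet G (Set.range b) \ Set.range a)
        ∪ (G.neighborSet u \ (Set.range a ∪ (NSet G (Set.range b) \ Set.range a)))
        ∪ (NSet G (NSet G (Set.range a) \ ({u} ∪ Set.range b)) \
            (G.neighborSet u \ (Set.range a ∪ (NSet G (Set.range b) \ Set.range a))
              ∪ Set.range a ∪ (NSet G (Set.range b) \ Set.range a)))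
        ∪ (NSet G (NSet G (Set.range b) \ Set.range a) \
            ({u} ∪ Set.range b ∪ (NSet G (Set.range a) \ ({u} ∪ Set.range b)))) := by
  classical
  obtain ⟨Wp, Bp, hUniv, hDisj, hIW, hIB⟩ := hbip
  obtain ⟨hainj, hbinj, hanu, hbnu, hab, huA, hAB, hnub, hnaa, hnbb, hnab⟩ := hmax.1
  set A0 : Set V := Set.range a with hA0def
  set B0 : Set V := Set.range b with hB0def
  set B1 : Set V := NSet G B0 \ A0 with hB1def
  set A1 : Set V := NSet G A0 \ ({u} ∪ B0) with hA1def
  set CC : Set V := G.neighborSet u \ (A0 ∪ B1) with hCdef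
  set D1 : Set V := NSet G A1 \ (CC ∪ A0 ∪ B1) with hD1def
  set D2 : Set V := NSet G B1 \ ({u} ∪ B0 ∪ A1) with hD2def
  set S : Set V := {u} ∪ A0 ∪ A1 ∪ B0 ∪ B1 ∪ CC ∪ D1 ∪ D2 with hSdef
  -- membership characterizations
  have hmemS : ∀ x : V,
      (x = u ∨ x ∈ A0 ∨ x ∈ A1 ∨ x ∈ B0 ∨ x ∈ B1 ∨ x ∈ CC ∨ x ∈ D1 ∨ x ∈ D2) → x ∈ S := by
    intro x hx
    rw [hSdef]
    simp only [Set.mem_union, Set.mem_singleton_iff]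
    tauto
  have memB1 : ∀ z, z ∈ B1 ↔ ((∃ i, G.Adj (b i) z) ∧ z ∉ A0) := by
    intro z
    rw [hB1def]
    constructor
    · rintro ⟨⟨t, ht, hadj⟩, h2⟩
      rw [hB0def] at ht
      obtain ⟨i, rfl⟩ := ht
      exact ⟨⟨i, hadj⟩, h2⟩
    · rintro ⟨⟨i, hadj⟩, h2⟩
      exact ⟨⟨b i, by rw [hB0def]; exact ⟨i, rfl⟩, hadj⟩, h2⟩
  have memA1 : ∀ v, v ∈ A1 ↔ ((∃ i, G.Adj (a i) v) ∧ v ≠ u ∧ v ∉ B0) := by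
    intro v
    rw [hA1def]
    constructor
    · rintro ⟨⟨t, ht, hadj⟩, h2⟩
      rw [hA0def] at ht
      obtain ⟨i, rfl⟩ := ht
      exact ⟨⟨i, hadj⟩, fun h => h2 (Or.inl h), fun h => h2 (Or.inr h)⟩
    · rintro ⟨⟨i, hadj⟩, h2, h3⟩
      refine ⟨⟨a i, by rw [hA0def]; exact ⟨i, rfl⟩, hadj⟩, fun h => ?_⟩
      rcases h with h | h
      exacts [h2 h, h3 h]
  have memC : ∀ x, x ∈ CC ↔ (G.Adj u x ∧ x ∉ A0 ∧ x ∉ B1) := by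
    intro x
    rw [hCdef]
    constructor
    · rintro ⟨h1, h2⟩
      exact ⟨h1, fun h => h2 (Or.inl h), fun h => h2 (Or.inr h)⟩
    · rintro ⟨h1, h2, h3⟩
      refine ⟨h1, fun h => ?_⟩
      rcases h with h | h
      exacts [h2 h, h3 h]
  have memD1 : ∀ x, x ∈ D1 ↔ ((∃ v ∈ A1, G.Adj v x) ∧ x ∉ CC ∧ x ∉ A0 ∧ x ∉ B1) := by
    intro x
    rw [hD1def]
    constructor
    · rintro ⟨h1, h2⟩
      exact ⟨h1, fun h => h2 (Or.inl (Or.inl h)), fun h => h2 (Or.inl (Or.inr h)),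
        fun h => h2 (Or.inr h)⟩
    · rintro ⟨h1, h2, h3, h4⟩
      refine ⟨h1, fun h => ?_⟩
      rcases h with (h | h) | h
      exacts [h2 h, h3 h, h4 h]
  have memD2 : ∀ x, x ∈ D2 ↔ ((∃ z ∈ B1, G.Adj z x) ∧ x ≠ u ∧ x ∉ B0 ∧ x ∉ A1) := by
    intro x
    rw [hD2def]
    constructor
    · rintro ⟨h1, h2⟩
      exact ⟨h1, fun h => h2 (Or.inl (Or.inl h)), fun h => h2 (Or.inl (Or.inr h)),
        fun h => h2 (Or.inr h)⟩
    · rintro ⟨h1, h2, h3, h4⟩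
      refine ⟨h1, fun h => ?_⟩
      rcases h with (h | h) | h
      exacts [h2 h, h3 h, h4 h]
  -- bipartite helpers
  have hopp : ∀ x y : V, G.Adj x y → (x ∈ Wp ↔ y ∉ Wp) := by
    intro x y hxy
    constructor
    · intro hx hy
      exact hIW hx hy hxy.ne hxy
    · intro hy
      by_contra hx
      have hyB : y ∈ Bp := by
        have hy2 : y ∈ Wp ∪ Bp := hUniv ▸ Set.mem_univ y
        rcases hy2 with h | h
        exacts [absurd h hy, h]
      have hxB : x ∈ Bp := by
        have hx2 : x ∈ Wp ∪ Bp := hUniv ▸ Set.mem_univ x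
        rcases hx2 with h | h
        exacts [absurd h hx, h]
      exact hIB hxB hyB hxy.ne hxy
  have hsame : ∀ x y : V, (x ∈ Wp ↔ y ∈ Wp) → ¬ G.Adj x y := by
    intro x y h hxy
    have := hopp x y hxy
    tauto
  have hneq : ∀ x y : V, (x ∈ Wp ↔ y ∉ Wp) → x ≠ y := by
    intro x y h heq
    subst heq
    tauto
  -- side facts
  have sA : ∀ i, (a i ∈ Wp ↔ u ∉ Wp) := fun i => by have := hopp u (a i) (huA i); tauto
  have sB : ∀ i, (b i ∈ Wp ↔ u ∈ Wp) := fun i => by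
    have h1 := hopp (a i) (b i) (hAB i); have h2 := sA i; tauto
  have sB1 : ∀ z ∈ B1, (z ∈ Wp ↔ u ∉ Wp) := by
    intro z hz
    obtain ⟨⟨i, hadj⟩, -⟩ := (memB1 z).mp hz
    have h1 := hopp (b i) z hadj; have h2 := sB i; tauto
  have sA1 : ∀ v ∈ A1, (v ∈ Wp ↔ u ∈ Wp) := by
    intro v hv
    obtain ⟨⟨i, hadj⟩, -⟩ := (memA1 v).mp hv
    have h1 := hopp (a i) v hadj; have h2 := sA i; tauto
  -- contrapositive neighbourhood facts
  have hnotNb : ∀ y, y ∉ A0 → y ∉ B1 → ∀ i, ¬ G.Adj (b i) y :=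
    fun y h1 h2 i hadj => h2 ((memB1 y).mpr ⟨⟨i, hadj⟩, h1⟩)
  have hnotNa : ∀ y, y ≠ u → y ∉ B0 → y ∉ A1 → ∀ i, ¬ G.Adj (a i) y :=
    fun y h0 h1 h2 i hadj => h2 ((memA1 y).mpr ⟨⟨i, hadj⟩, h0, h1⟩)
  have hnotNu : ∀ y, y ∉ A0 → y ∉ B1 → y ∉ CC → ¬ G.Adj u y :=
    fun y h1 h2 h3 hadj => h3 ((memC y).mpr ⟨hadj, h1, h2⟩)
  -- every vertex of B1 is adjacent to u
  have hB1u : ∀ z ∈ B1, G.Adj u z := by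
    intro z hz
    obtain ⟨⟨i, hbz⟩, hzA⟩ := (memB1 z).mp hz
    by_contra huz
    obtain ⟨j, hj, l, hl, hjl⟩ : ∃ j ∈ Finset.univ.erase i, ∃ l ∈ Finset.univ.erase i, j ≠ l := by
      apply Finset.one_lt_card.mp
      rw [Finset.card_erase_of_mem (Finset.mem_univ i), Finset.card_univ, Fintype.card_fin]
      omega
    have hji : j ≠ i := Finset.ne_of_mem_erase hj
    have hli : l ≠ i := Finset.ne_of_mem_erase hl
    have sz := sB1 z hz
    exact no_S113_copy hfree (huA j) (huA l) (huA i) (hAB i) hbz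
      (hnaa j l hjl) (hnaa j i hji) (hnab j i hji)
      (hsame (a j) z (by have := sA j; tauto))
      (hnaa l i hli) (hnab l i hli)
      (hsame (a l) z (by have := sA l; tauto))
      (hnub i) huz
      (hsame (a i) z (by have := sA i; tauto))
      (fun h => hjl (hainj h)) (fun h => hji (hainj h)) (hab j i)
      (fun h => hzA (by rw [hA0def]; exact ⟨j, h⟩))
      (fun h => hli (hainj h)) (hab l i)
      (fun h => hzA (by rw [hA0def]; exact ⟨l, h⟩))
      ((hbnu i).symm)
      (hneq u z (by tauto))
      (fun h => hzA (by rw [hA0def]; exact ⟨i, h⟩))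
  -- closure of S under adjacency
  have hcl : ∀ x ∈ S, ∀ y, G.Adj x y → y ∈ S := by
    intro x hxS y hxy
    have hxS' : x = u ∨ x ∈ A0 ∨ x ∈ A1 ∨ x ∈ B0 ∨ x ∈ B1 ∨ x ∈ CC ∨ x ∈ D1 ∨ x ∈ D2 := by
      rw [hSdef] at hxS
      simp only [Set.mem_union, Set.mem_singleton_iff] at hxS
      tauto
    rcases hxS' with rfl | hx | hx | hx | hx | hx | hx | hx
    · -- x = u
      by_cases h1 : y ∈ A0
      · exact hmemS y (by tauto)
      by_cases h2 : y ∈ B1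
      · exact hmemS y (by tauto)
      exact hmemS y (Or.inr (Or.inr (Or.inr (Or.inr (Or.inr (Or.inl
        ((memC y).mpr ⟨hxy, h1, h2⟩))))))) 
    · -- x ∈ A0
      rw [hA0def] at hx
      obtain ⟨i, rfl⟩ := hx
      by_cases h1 : y = u
      · exact hmemS y (by tauto)
      by_cases h2 : y ∈ B0
      · exact hmemS y (by tauto)
      exact hmemS y (by
        have : y ∈ A1 := (memA1 y).mpr ⟨⟨i, hxy⟩, h1, h2⟩
        tauto)
    · -- x ∈ A1
      by_cases h1 : y ∈ CC
      · exact hmemS y (by tauto)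
      by_cases h2 : y ∈ A0
      · exact hmemS y (by tauto)
      by_cases h3 : y ∈ B1
      · exact hmemS y (by tauto)
      exact hmemS y (by
        have : y ∈ D1 := (memD1 y).mpr ⟨⟨x, hx, hxy⟩, h1, h2, h3⟩
        tauto)
    · -- x ∈ B0
      rw [hB0def] at hx
      obtain ⟨i, rfl⟩ := hx
      by_cases h1 : y ∈ A0
      · exact hmemS y (by tauto)
      exact hmemS y (by
        have : y ∈ B1 := (memB1 y).mpr ⟨⟨i, hxy⟩, h1⟩
        tauto)
    · -- x ∈ B1
      by_cases h1 : y = u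
      · exact hmemS y (by tauto)
      by_cases h2 : y ∈ B0
      · exact hmemS y (by tauto)
      by_cases h3 : y ∈ A1
      · exact hmemS y (by tauto)
      exact hmemS y (by
        have : y ∈ D2 := (memD2 y).mpr ⟨⟨x, hx, hxy⟩, h1, h2, h3⟩
        tauto)
    · -- x ∈ CC : use maximality of the tree copy
      by_cases hyu : y = u
      · exact hmemS y (by tauto)
      by_cases hyB0 : y ∈ B0
      · exact hmemS y (by tauto)
      by_cases hyA1 : y ∈ A1
      · exact hmemS y (by tauto)
      exfalso
      obtain ⟨hux, hxA0, hxB1⟩ := (memC x).mp hx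
      have sx : x ∈ Wp ↔ u ∉ Wp := by have := hopp u x hux; tauto
      have sy : y ∈ Wp ↔ u ∈ Wp := by have := hopp x y hxy; tauto
      apply extend_tree_contra hmax hux hxy
        (fun i h => hxA0 (by rw [hA0def]; exact ⟨i, h.symm⟩))
        (fun i => hneq x (b i) (by have := sB i; tauto))
        (fun i => hneq y (a i) (by have := sA i; tauto))
        (fun i h => hyB0 (by rw [hB0def]; exact ⟨i, h.symm⟩))
        hyu
        (fun i => hsame x (a i) (by have := sA i; tauto))
        (fun i h => hnotNb x hxA0 hxB1 i h.symm)
        (hsame u y (by tauto))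
        (fun i h => hnotNa y hyu hyB0 hyA1 i h.symm)
        (fun i => hsame y (b i) (by have := sB i; tauto))
    · -- x ∈ D1
      have hxD1 := hx
      obtain ⟨⟨v, hvA1, hvx⟩, hxC, hxA0, hxB1⟩ := (memD1 x).mp hx
      obtain ⟨⟨i, hav⟩, hvu, hvB0⟩ := (memA1 v).mp hvA1
      by_cases hyu : y = u
      · exact hmemS y (by tauto)
      by_cases hyB0 : y ∈ B0
      · exact hmemS y (by tauto)
      by_cases hyA1 : y ∈ A1
      · exact hmemS y (by tauto)
      exfalso
      have sv : v ∈ Wp ↔ u ∈ Wp := sA1 v hvA1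
      have sx : x ∈ Wp ↔ u ∉ Wp := by have := hopp v x hvx; tauto
      have sy : y ∈ Wp ↔ u ∈ Wp := by have := hopp x y hxy; tauto
      exact no_S113_copy hfree (huA i).symm (hAB i) hav hvx hxy
        (hnub i)
        (hsame u v (by tauto))
        (hnotNu x hxA0 hxB1 hxC)
        (hsame u y (by tauto))
        (hsame (b i) v (by have := sB i; tauto))
        (hnotNb x hxA0 hxB1 i)
        (hsame (b i) y (by have := sB i; tauto))
        (hsame (a i) x (by have := sA i; tauto))
        (hnotNa y hyu hyB0 hyA1 i)
        (hsame v y (by tauto))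
        ((hbnu i).symm)
        (Ne.symm hvu)
        (hneq u x (by tauto))
        (fun h => hyu h.symm)
        (fun h => hvB0 (by rw [hB0def]; exact ⟨i, h⟩))
        (hneq (b i) x (by have := sB i; tauto))
        (fun h => hyB0 (by rw [hB0def]; exact ⟨i, h⟩))
        (fun h => hxA0 (by rw [hA0def]; exact ⟨i, h⟩))
        (hneq (a i) y (by have := sA i; tauto))
        (fun h => hyA1 (h ▸ hvA1))
    · -- x ∈ D2
      have hxD2 := hx
      obtain ⟨⟨z, hzB1, hzx⟩, hxu, hxB0, hxA1⟩ := (memD2 x).mp hx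
      by_cases hyA0 : y ∈ A0
      · exact hmemS y (by tauto)
      by_cases hyB1 : y ∈ B1
      · exact hmemS y (by tauto)
      by_cases hyC : y ∈ CC
      · exact hmemS y (by tauto)
      exfalso
      have huz := hB1u z hzB1
      have hzA0 : z ∉ A0 := ((memB1 z).mp hzB1).2
      obtain ⟨j, l, hjl⟩ : ∃ j l : Fin k, j ≠ l :=
        ⟨⟨0, by omega⟩, ⟨1, by omega⟩, by simp [Fin.ext_iff]⟩
      have sz : z ∈ Wp ↔ u ∉ Wp := sB1 z hzB1
      have sx : x ∈ Wp ↔ u ∈ Wp := by have := hopp z x hzx; tauto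
      have sy : y ∈ Wp ↔ u ∉ Wp := by have := hopp x y hxy; tauto
      exact no_S113_copy hfree (huA j) (huA l) huz hzx hxy
        (hnaa j l hjl)
        (hsame (a j) z (by have := sA j; tauto))
        (hnotNa x hxu hxB0 hxA1 j)
        (hsame (a j) y (by have := sA j; tauto))
        (hsame (a l) z (by have := sA l; tauto))
        (hnotNa x hxu hxB0 hxA1 l)
        (hsame (a l) y (by have := sA l; tauto))
        (hsame u x (by tauto))
        (hnotNu y hyA0 hyB1 hyC)
        (hsame z y (by tauto))
        (fun h => hjl (hainj h))
        (fun h => hzA0 (by rw [hA0def]; exact ⟨j, h⟩))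
        (hneq (a j) x (by have := sA j; tauto))
        (fun h => hyA0 (by rw [hA0def]; exact ⟨j, h⟩))
        (fun h => hzA0 (by rw [hA0def]; exact ⟨l, h⟩))
        (hneq (a l) x (by have := sA l; tauto))
        (fun h => hyA0 (by rw [hA0def]; exact ⟨l, h⟩))
        (fun h => hxu h.symm)
        (hneq u y (by tauto))
        (fun h => hyB1 (h ▸ hzB1))
  -- connectivity
  have huS : u ∈ S := hmemS u (Or.inl rfl)
  have key : ∀ x y : V, G.Walk x y → x ∈ S → y ∈ S := by
    intro x y p
    induction p with
    | nil => exact id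
    | cons h q ih => exact fun hs => ih (hcl _ hs _ h)
  intro v
  obtain ⟨p⟩ := hconn.preconnected u v
  exact key u v p huS

/-- In a finite connected bipartite `S_{1,1,3}`-free graph, every vertex belongs to
`{u} ∪ A_0 ∪ A_1 ∪ B_0 ∪ B_1 ∪ C ∪ D_1 ∪ D_2`, where these sets are defined from a
maximal induced copy of `T_k` (`k ≥ 3`) with centre `u`. -/
theorem statement11 {V : Type} [Fintype V] (G : SimpleGraph V)
    (hbip : ∃ Wp Bp : Set V, IsBipartition G Wp Bp)
    (hconn : G.Connected)
    (hfree : IsEmpty (S113 ↪g G))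
    (k : ℕ) (hk : 3 ≤ k) (u : V) (a b : Fin k → V)
    (hmax : MaximalSimpleTreeCopy G k u a b) :
    let A0 : Set V := Set.range a
    let B0 : Set V := Set.range b
    let B1 : Set V := NSet G B0 \ A0
    let A1 : Set V := NSet G A0 \ ({u} ∪ B0)
    let C : Set V := G.neighborSet u \ (A0 ∪ B1)
    let D1 : Set V := NSet G A1 \ (C ∪ A0 ∪ B1)
    let D2 : Set V := NSet G B1 \ ({u} ∪ B0 ∪ A1)
    ∀ v : V, v ∈ ({u} : Set V) ∪ A0 ∪ A1 ∪ B0 ∪ B1 ∪ C ∪ D1 ∪ D2 := by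
  intro A0 B0 B1 A1 C D1 D2
  exact statement11_aux G hbip hconn hfree k hk u a b hmax
end

section
/- Let p be a positive integer and let H be a finite bipartite graph with parts W (white) and B (black) that is irreducible, S_{1,1,3}-free and K_{p,p}-free. If H contains an induced copy of the simple tree T_{p+2}, then H contains an induced copy of T_{p+2} whose central vertex (the vertex of degree p+2 of the copy) belongs to B. -/
set_option maxHeartbeats 1600000
set_option maxRecDepth 4000


open SimpleGraph

private lemma mkS113 {V : Type} {G : SimpleGraph V} (hS : IsEmpty (S113 ↪g G))
    (v0 v1 v2 v3 v4 v5 : V)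
    (e01 : G.Adj v0 v1) (e02 : G.Adj v0 v2) (e03 : G.Adj v0 v3)
    (e34 : G.Adj v3 v4) (e45 : G.Adj v4 v5)
    (n04 : ¬G.Adj v0 v4) (n05 : ¬G.Adj v0 v5) (n12 : ¬G.Adj v1 v2)
    (n13 : ¬G.Adj v1 v3) (n14 : ¬G.Adj v1 v4) (n15 : ¬G.Adj v1 v5)
    (n23 : ¬G.Adj v2 v3) (n24 : ¬G.Adj v2 v4) (n25 : ¬G.Adj v2 v5)
    (n35 : ¬G.Adj v3 v5)
    (d04 : v0 ≠ v4) (d05 : v0 ≠ v5) (d12 : v1 ≠ v2) (d13 : v1 ≠ v3)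
    (d14 : v1 ≠ v4) (d15 : v1 ≠ v5) (d23 : v2 ≠ v3) (d24 : v2 ≠ v4)
    (d25 : v2 ≠ v5) (d35 : v3 ≠ v5) : False := by
  have d01 := e01.ne; have d02 := e02.ne; have d03 := e03.ne
  have d34 := e34.ne; have d45 := e45.ne
  have s01 := e01.symm; have s02 := e02.symm; have s03 := e03.symm
  have s34 := e34.symm; have s45 := e45.symm
  have m04 : ¬G.Adj v4 v0 := fun h => n04 h.symm
  have m05 : ¬G.Adj v5 v0 := fun h => n05 h.symm
  have m12 : ¬G.Adj v2 v1 := fun h => n12 h.symm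
  have m13 : ¬G.Adj v3 v1 := fun h => n13 h.symm
  have m14 : ¬G.Adj v4 v1 := fun h => n14 h.symm
  have m15 : ¬G.Adj v5 v1 := fun h => n15 h.symm
  have m23 : ¬G.Adj v3 v2 := fun h => n23 h.symm
  have m24 : ¬G.Adj v4 v2 := fun h => n24 h.symm
  have m25 : ¬G.Adj v5 v2 := fun h => n25 h.symm
  have m35 : ¬G.Adj v5 v3 := fun h => n35 h.symm
  have i01 : v1 ≠ v0 := fun h => d01 h.symm
  have i02 : v2 ≠ v0 := fun h => d02 h.symm
  have i03 : v3 ≠ v0 := fun h => d03 h.symm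
  have i34 : v4 ≠ v3 := fun h => d34 h.symm
  have i45 : v5 ≠ v4 := fun h => d45 h.symm
  have i04 : v4 ≠ v0 := fun h => d04 h.symm
  have i05 : v5 ≠ v0 := fun h => d05 h.symm
  have i12 : v2 ≠ v1 := fun h => d12 h.symm
  have i13 : v3 ≠ v1 := fun h => d13 h.symm
  have i14 : v4 ≠ v1 := fun h => d14 h.symm
  have i15 : v5 ≠ v1 := fun h => d15 h.symm
  have i23 : v3 ≠ v2 := fun h => d23 h.symm
  have i24 : v4 ≠ v2 := fun h => d24 h.symm
  have i25 : v5 ≠ v2 := fun h => d25 h.symm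
  have i35 : v5 ≠ v3 := fun h => d35 h.symm
  apply hS.false
  refine ⟨⟨fun i : Fin 6 => if i.val = 0 then v0 else if i.val = 1 then v1
      else if i.val = 2 then v2 else if i.val = 3 then v3 else if i.val = 4 then v4 else v5,
      ?_⟩, @fun a b => ?_⟩
  · intro a b hab
    fin_cases a <;> fin_cases b <;> norm_num at hab ⊢ <;> simp_all
  · fin_cases a <;> fin_cases b <;>
      (simp only [S113, SimpleGraph.fromRel_adj, Fin.ext_iff]; try norm_num) <;>
      (first | decide | (simp_all <;> decide) | simp_all)

private lemma mkKpp {V : Type} {G : SimpleGraph V} {p : ℕ} {W B : Set V}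
    (hDisj : Disjoint W B) (hIW : IndepOn G W) (hIB : IndepOn G B)
    (hK : IsEmpty (completeBipartiteGraph (Fin p) (Fin p) ↪g G))
    (w x : Fin p → V) (hw : Function.Injective w) (hx : Function.Injective x)
    (hwW : ∀ i, w i ∈ W) (hxB : ∀ i, x i ∈ B)
    (hadj : ∀ i j, G.Adj (w i) (x j)) : False := by
  apply hK.false
  refine ⟨⟨Sum.elim w x, ?_⟩, @fun a b => ?_⟩
  · intro a b hab
    cases a with
    | inl i => cases b with
      | inl j => simp only [Sum.elim_inl] at hab; exact congrArg Sum.inl (hw hab)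
      | inr j =>
        simp only [Sum.elim_inl, Sum.elim_inr] at hab
        exact absurd (hab ▸ hwW i) (fun hh => Set.disjoint_left.mp hDisj hh (hxB j))
    | inr i => cases b with
      | inl j =>
        simp only [Sum.elim_inl, Sum.elim_inr] at hab
        exact absurd (hab ▸ hwW j) (fun hh => Set.disjoint_left.mp hDisj hh (hxB i))
      | inr j => simp only [Sum.elim_inr] at hab; exact congrArg Sum.inr (hx hab)
  · cases a with
    | inl i => cases b with
      | inl j =>
        simp only [Sum.elim_inl, completeBipartiteGraph]
        constructor
        · intro hadj'
          by_cases hij : i = j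
          · subst hij; exact absurd hadj' (G.irrefl)
          · exact absurd hadj' (hIW (hwW i) (hwW j) (fun hh => hij (hw hh)))
        · simp
      | inr j => simp [completeBipartiteGraph, hadj i j]; exact hadj i j
    | inr i => cases b with
      | inl j => simp [completeBipartiteGraph, (hadj j i).symm]; exact (hadj j i).symm
      | inr j =>
        simp only [Sum.elim_inr, completeBipartiteGraph]
        constructor
        · intro hadj'
          by_cases hij : i = j
          · subst hij; exact absurd hadj' (G.irrefl)
          · exact absurd hadj' (hIB (hxB i) (hxB j) (fun hh => hij (hx hh)))
        · simp

private lemma treeAdjIff (k : ℕ) (z w : Fin (2*k+1)) : (simpleTree k).Adj z w ↔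
    ((z.val = 0 ∧ 1 ≤ w.val ∧ w.val ≤ k) ∨ (w.val = 0 ∧ 1 ≤ z.val ∧ z.val ≤ k) ∨
     (1 ≤ z.val ∧ z.val ≤ k ∧ w.val = z.val + k) ∨ (1 ≤ w.val ∧ w.val ≤ k ∧ z.val = w.val + k)) := by
  rw [simpleTree, SimpleGraph.fromRel_adj]
  simp only [ne_eq, Fin.ext_iff]
  omega


/-- If an irreducible `(S_{1,1,3}, K_{p,p})`-free bipartite graph with white part `W`
and black part `B` contains an induced copy of `T_{p+2}`, then it contains an induced
copy of `T_{p+2}` whose central vertex is black. (Vertex `0` of `simpleTree (p+2)` is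
its centre.) -/
theorem statement12 {V : Type} [Fintype V] (p : ℕ) (hp : 1 ≤ p)
    (G : SimpleGraph V) (W B : Set V) (h : IrreducibleBip G W B)
    (hS : IsEmpty (S113 ↪g G))
    (hK : IsEmpty (completeBipartiteGraph (Fin p) (Fin p) ↪g G))
    (hT : Nonempty (simpleTree (p + 2) ↪g G)) :
    ∃ φ : simpleTree (p + 2) ↪g G, φ ⟨0, by omega⟩ ∈ B := by
  classical
  obtain ⟨φ0⟩ := hT
  obtain ⟨⟨hUniv, hDisj, hIW, hIB⟩, hCard, hExp, hConn⟩ := h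
  have memWB : ∀ v : V, v ∈ W ∨ v ∈ B := by
    intro v
    have hv : v ∈ W ∪ B := by rw [hUniv]; exact Set.mem_univ v
    exact hv
  have nadjW : ∀ {u v : V}, u ∈ W → v ∈ W → ¬G.Adj u v := by
    intro u v hu hv hadj
    exact hIW hu hv (G.ne_of_adj hadj) hadj
  have nadjB : ∀ {u v : V}, u ∈ B → v ∈ B → ¬G.Adj u v := by
    intro u v hu hv hadj
    exact hIB hu hv (G.ne_of_adj hadj) hadj
  have hWBne : ∀ {u v : V}, u ∈ W → v ∈ B → u ≠ v := by
    intro u v hu hv he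
    exact Set.disjoint_left.mp hDisj hu (he ▸ hv)
  have memB_of : ∀ {u v : V}, u ∈ W → G.Adj u v → v ∈ B := by
    intro u v hu hadj
    rcases memWB v with hv | hv
    · exact absurd hadj (nadjW hu hv)
    · exact hv
  have memW_of : ∀ {u v : V}, u ∈ B → G.Adj u v → v ∈ W := by
    intro u v hu hadj
    rcases memWB v with hv | hv
    · exact hv
    · exact absurd hadj (nadjB hu hv)
  -- value form of the adjacency of the tree copy
  have keyv : ∀ (m n : ℕ) (hm : m < 2*(p+2)+1) (hn : n < 2*(p+2)+1),
      G.Adj (φ0 ⟨m, hm⟩) (φ0 ⟨n, hn⟩) ↔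
      ((m = 0 ∧ 1 ≤ n ∧ n ≤ p+2) ∨ (n = 0 ∧ 1 ≤ m ∧ m ≤ p+2) ∨
       (1 ≤ m ∧ m ≤ p+2 ∧ n = m + (p+2)) ∨ (1 ≤ n ∧ n ≤ p+2 ∧ m = n + (p+2))) := by
    intro m n hm hn
    rw [φ0.map_rel_iff, treeAdjIff]
  have hφinj : ∀ (m n : ℕ) (hm : m < 2*(p+2)+1) (hn : n < 2*(p+2)+1),
      φ0 ⟨m, hm⟩ = φ0 ⟨n, hn⟩ → m = n := by
    intro m n hm hn he
    have := φ0.injective he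
    exact congrArg Fin.val this
  have h0 : (0:ℕ) < 2*(p+2)+1 := by omega
  set c := φ0 ⟨0, h0⟩ with hcdef
  by_cases hcB : c ∈ B
  · exact ⟨φ0, hcB⟩
  have hcW : c ∈ W := (memWB c).resolve_right hcB
  have hA : ∀ i : Fin (p+2), (i.val+1) < 2*(p+2)+1 := fun i => by omega
  have hB2 : ∀ i : Fin (p+2), (i.val+(p+3)) < 2*(p+2)+1 := fun i => by omega
  set afun : Fin (p+2) → V := fun i => φ0 ⟨i.val+1, hA i⟩ with hadef
  set bfun : Fin (p+2) → V := fun i => φ0 ⟨i.val+(p+3), hB2 i⟩ with hbdef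
  have hca : ∀ i, G.Adj c (afun i) := by
    intro i
    rw [hcdef, hadef, keyv]
    omega
  have hab : ∀ i, G.Adj (afun i) (bfun i) := by
    intro i
    rw [hadef, hbdef, keyv]
    omega
  have hncb : ∀ i, ¬G.Adj c (bfun i) := by
    intro i hadj
    rw [hcdef, hbdef, keyv] at hadj
    omega
  have hnab : ∀ i j, i ≠ j → ¬G.Adj (afun i) (bfun j) := by
    intro i j hij hadj
    rw [hadef, hbdef, keyv] at hadj
    have : i.val ≠ j.val := fun hv => hij (Fin.ext hv)
    omega
  have haB : ∀ i, afun i ∈ B := fun i => memB_of hcW (hca i)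
  have hbW : ∀ i, bfun i ∈ W := fun i => memW_of (haB i) (hab i)
  have hcne_a : ∀ i, c ≠ afun i := fun i => hWBne hcW (haB i)
  have hcne_b : ∀ i, c ≠ bfun i := by
    intro i he
    have := hφinj _ _ _ _ (hcdef ▸ hbdef ▸ he)
    omega
  have hane_b : ∀ i j, afun i ≠ bfun j := fun i j => (hWBne (hbW j) (haB i)).symm
  have hainj : Function.Injective afun := by
    intro i j he
    have := hφinj _ _ _ _ (hadef ▸ he)
    exact Fin.ext (by omega)
  have hbinj : Function.Injective bfun := by
    intro i j he
    have := hφinj _ _ _ _ (hbdef ▸ he)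
    exact Fin.ext (by omega)
  -- p = 1 : contradiction with K_{1,1}-freeness
  by_cases hp1 : p = 1
  · exfalso
    subst hp1
    exact mkKpp hDisj hIW hIB hK (fun _ => c) (fun _ => afun ⟨0, by omega⟩)
      (fun a b _ => Subsingleton.elim a b) (fun a b _ => Subsingleton.elim a b)
      (fun _ => hcW) (fun _ => haB _) (fun _ _ => hca _)
  have hp2 : 2 ≤ p := by omega
  -- two indices different from a given one
  have pick2 : ∀ i : Fin (p+2), ∃ j l : Fin (p+2), j ≠ i ∧ l ≠ i ∧ j ≠ l := by
    intro i
    refine ⟨if i.val = 0 then ⟨1, by omega⟩ else ⟨0, by omega⟩,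
      if i.val ≤ 1 then ⟨2, by omega⟩ else ⟨1, by omega⟩, ?_, ?_, ?_⟩ <;>
      · simp only [Ne, Fin.ext_iff]
        split_ifs <;> simp <;> omega
  have pick1 : ∀ i : Fin (p+2), ∃ j : Fin (p+2), j ≠ i := by
    intro i
    refine ⟨if i.val = 0 then ⟨1, by omega⟩ else ⟨0, by omega⟩, ?_⟩
    simp only [Ne, Fin.ext_iff]
    split_ifs <;> simp <;> omega
  -- Fact 1 : every neighbour of b_i is adjacent to c
  have fact1 : ∀ (i : Fin (p+2)) (x : V), G.Adj (bfun i) x → G.Adj c x := by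
    intro i x hbx
    by_contra hncx
    have hxB : x ∈ B := memB_of (hbW i) hbx
    obtain ⟨j, l, hji, hli, hjl⟩ := pick2 i
    exact mkS113 hS c (afun j) (afun l) (afun i) (bfun i) x
      (hca j) (hca l) (hca i) (hab i) hbx
      (hncb i) hncx (nadjB (haB j) (haB l)) (nadjB (haB j) (haB i)) (hnab j i hji)
      (nadjB (haB j) hxB) (nadjB (haB l) (haB i)) (hnab l i hli) (nadjB (haB l) hxB)
      (nadjB (haB i) hxB)
      (hcne_b i) (hWBne hcW hxB) (fun he => hjl (hainj he)) (fun he => hji (hainj he))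
      (hane_b j i) (fun he => hncx (he ▸ hca j)) (fun he => hli (hainj he)) (hane_b l i)
      (fun he => hncx (he ▸ hca l)) (fun he => hncx (he ▸ hca i))
  -- a black vertex outside the a's adjacent to two b's is adjacent to all b's
  have L3 : ∀ (x : V), x ∈ B → (∀ j, x ≠ afun j) →
      ∀ i1 i2 : Fin (p+2), i1 ≠ i2 → G.Adj x (bfun i1) → G.Adj x (bfun i2) →
      ∀ j, G.Adj x (bfun j) := by
    intro x hxB hxa i1 i2 h12 hx1 hx2 j
    by_cases hj1 : j = i1
    · exact hj1 ▸ hx1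
    by_cases hj2 : j = i2
    · exact hj2 ▸ hx2
    by_contra hnadj
    have hxc : G.Adj x c := (fact1 i1 x hx1.symm).symm
    exact mkS113 hS x (bfun i1) (bfun i2) c (afun j) (bfun j)
      hx1 hx2 hxc (hca j) (hab j)
      (nadjB hxB (haB j)) hnadj (nadjW (hbW i1) (hbW i2)) (nadjW (hbW i1) hcW)
      (fun h => hnab j i1 hj1 h.symm) (nadjW (hbW i1) (hbW j))
      (nadjW (hbW i2) hcW) (fun h => hnab j i2 hj2 h.symm)
      (nadjW (hbW i2) (hbW j)) (hncb j)
      (hxa j) (hWBne (hbW j) hxB).symm (fun he => h12 (hbinj he))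
      (hcne_b i1).symm (hane_b j i1).symm (fun he => hj1 (hbinj he).symm)
      (hcne_b i2).symm (hane_b j i2).symm (fun he => hj2 (hbinj he).symm) (hcne_b j)
  by_cases hcase : ∃ x, x ∈ B ∧ (∀ j, x ≠ afun j) ∧
      ∃ i1 i2 : Fin (p+2), i1 ≠ i2 ∧ G.Adj x (bfun i1) ∧ G.Adj x (bfun i2)
  · -- Branch b : build the tree centred at x
    obtain ⟨x, hxB, hxa, i1, i2, h12, hx1, hx2⟩ := hcase
    have hdall : ∀ j, G.Adj x (bfun j) := L3 x hxB hxa i1 i2 h12 hx1 hx2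
    have hdbv : ∀ (m : ℕ), 1 ≤ m → m ≤ p+2 → ∀ (hm : m + (p+2) < 2*(p+2)+1),
        G.Adj x (φ0 ⟨m + (p+2), hm⟩) := by
      intro m h1 h2 hm
      have hh := hdall ⟨m-1, by omega⟩
      rw [hbdef] at hh
      rw [show (⟨m + (p+2), hm⟩ : Fin (2*(p+2)+1)) = ⟨(m-1)+(p+3), by omega⟩ from
        Fin.ext (show m + (p+2) = (m-1)+(p+3) by omega)]
      exact hh
    have hnxav : ∀ (m : ℕ), 1 ≤ m → m ≤ p+2 → ∀ (hm : m < 2*(p+2)+1),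
        ¬G.Adj x (φ0 ⟨m, hm⟩) := by
      intro m h1 h2 hm
      have he : φ0 ⟨m, hm⟩ = afun ⟨m-1, by omega⟩ := by
        rw [hadef]
        exact congrArg _ (Fin.ext (show m = (m-1)+1 by omega))
      rw [he]
      exact nadjB hxB (haB _)
    have hxnev : ∀ z : Fin (2*(p+2)+1), x ≠ φ0 z := by
      intro z he
      rcases Nat.lt_or_ge z.val 1 with hz | hz
      · have hz0 : z = ⟨0, h0⟩ := Fin.ext (show z.val = 0 by omega)
        rw [hz0] at he
        exact hWBne hcW hxB (hcdef ▸ he.symm)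
      rcases Nat.lt_or_ge z.val (p+3) with hz2 | hz2
      · have he2 : φ0 z = afun ⟨z.val - 1, by omega⟩ := by
          rw [hadef]
          exact congrArg _ (Fin.ext (show z.val = (z.val-1)+1 by omega))
        exact hxa _ (he2 ▸ he)
      · have he2 : φ0 z = bfun ⟨z.val - (p+3), by omega⟩ := by
          rw [hbdef]
          exact congrArg _ (Fin.ext (show z.val = (z.val-(p+3))+(p+3) by omega))
        rw [he2] at he
        exact (hWBne (hbW _) hxB) he.symm
    refine ⟨⟨⟨fun z => if z.val = 0 then x
        else if hz : z.val ≤ p+2 then φ0 ⟨z.val + (p+2), by omega⟩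
        else φ0 ⟨z.val - (p+2), by omega⟩, ?_⟩, @fun z w => ?_⟩, ?_⟩
    · -- injectivity
      intro z w he
      beta_reduce at he
      split_ifs at he with h1 h2 h3 h4 h5 h6 <;>
        first
        | (exact Fin.ext (by omega))
        | (exact absurd he (hxnev _))
        | (exact absurd he.symm (hxnev _))
        | (exact Fin.ext (by have := hφinj _ _ _ _ he; omega))
    · -- adjacency iff
      show G.Adj (if z.val = 0 then x else if hz : z.val ≤ p+2 then φ0 ⟨z.val + (p+2), by omega⟩
          else φ0 ⟨z.val - (p+2), by omega⟩)
        (if w.val = 0 then x else if hz : w.val ≤ p+2 then φ0 ⟨w.val + (p+2), by omega⟩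
          else φ0 ⟨w.val - (p+2), by omega⟩) ↔ _
      rw [treeAdjIff]
      by_cases h1 : z.val = 0 <;> by_cases h2 : w.val = 0
      · rw [if_pos h1, if_pos h2]
        constructor
        · intro h'
          exact absurd h' (G.irrefl)
        · intro h'
          omega
      · rw [if_pos h1, if_neg h2]
        by_cases h3 : w.val ≤ p+2
        · rw [dif_pos h3]
          constructor
          · intro _
            omega
          · intro _
            exact hdbv w.val (by omega) h3 (by omega)
        · rw [dif_neg h3]
          constructor
          · intro h'
            exact absurd h' (hnxav (w.val - (p+2)) (by omega) (by omega) _)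
          · intro h'
            omega
      · rw [if_neg h1, if_pos h2]
        by_cases h3 : z.val ≤ p+2
        · rw [dif_pos h3]
          constructor
          · intro _
            omega
          · intro _
            exact (hdbv z.val (by omega) h3 (by omega)).symm
        · rw [dif_neg h3]
          constructor
          · intro h'
            exact absurd h'.symm (hnxav (z.val - (p+2)) (by omega) (by omega) _)
          · intro h'
            omega
      · rw [if_neg h1, if_neg h2]
        by_cases h3 : z.val ≤ p+2 <;> by_cases h4 : w.val ≤ p+2
        · rw [dif_pos h3, dif_pos h4, keyv]
          omega
        · rw [dif_pos h3, dif_neg h4, keyv]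
          omega
        · rw [dif_neg h3, dif_pos h4, keyv]
          omega
        · rw [dif_neg h3, dif_neg h4, keyv]
          omega
    · -- centre is black
      exact hxB
  · -- Branch c : contradiction
    exfalso
    have hC : ∀ x, x ∈ B → (∀ j, x ≠ afun j) → ∀ i1 i2 : Fin (p+2),
        G.Adj x (bfun i1) → G.Adj x (bfun i2) → i1 = i2 := by
      intro x hxB hxa i1 i2 h1 h2
      by_contra hne
      exact hcase ⟨x, hxB, hxa, i1, i2, hne, h1, h2⟩
    have hNb : ∀ i : Fin (p+2), ∃ x, G.Adj (bfun i) x ∧ x ∈ B ∧ x ≠ afun i := by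
      intro i
      have hsub : {bfun i} ⊆ W := Set.singleton_subset_iff.mpr (hbW i)
      have hlt := hExp {bfun i} hsub ⟨bfun i, rfl⟩
      rw [Set.ncard_singleton, Set.one_lt_ncard_iff (Set.toFinite _)] at hlt
      obtain ⟨u, v, hu, hv, huv⟩ := hlt
      obtain ⟨⟨u', hu', huadj⟩, huB⟩ := hu
      obtain ⟨⟨v', hv', hvadj⟩, hvB⟩ := hv
      rw [Set.mem_singleton_iff] at hu' hv'
      subst hu'
      subst hv'
      by_cases hua : u = afun i
      · refine ⟨v, hvadj, hvB, ?_⟩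
        rw [← hua]
        exact fun he => huv he.symm
      · exact ⟨u, huadj, huB, hua⟩
    choose dfun hdb hdB hdna using hNb
    have hdc : ∀ i, G.Adj c (dfun i) := fun i => fact1 i (dfun i) (hdb i)
    have hdna' : ∀ i j, dfun i ≠ afun j := by
      intro i j he
      by_cases hij : j = i
      · exact hdna i (hij ▸ he)
      · exact hnab j i hij (he ▸ (hdb i)).symm
    have hdinj : Function.Injective dfun := by
      intro i j he
      refine hC (dfun j) (hdB j) (hdna' j) i j ?_ (hdb j).symm
      rw [← he]
      exact (hdb i).symm
    have allA : ∀ u, u ∈ W → u ≠ c → (∀ i, u ≠ bfun i) → ∀ i0, G.Adj u (afun i0) →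
        ∀ j, G.Adj u (afun j) := by
      intro u huW hunec hunb i0 hadj j
      by_cases hj : j = i0
      · exact hj ▸ hadj
      by_contra hnadj
      exact mkS113 hS (afun i0) (bfun i0) u c (afun j) (bfun j)
        (hab i0) hadj.symm (hca i0).symm (hca j) (hab j)
        (nadjB (haB i0) (haB j)) (hnab i0 j (fun he => hj he.symm)) (nadjW (hbW i0) huW)
        (nadjW (hbW i0) hcW) (fun hh => hnab j i0 hj hh.symm) (nadjW (hbW i0) (hbW j))
        (nadjW huW hcW) hnadj (nadjW huW (hbW j)) (hncb j)
        (fun he => hj (hainj he).symm) (hane_b i0 j) (fun he => (hunb i0) he.symm)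
        (hcne_b i0).symm (hane_b j i0).symm (fun he => hj (hbinj he).symm)
        hunec (hWBne huW (haB j)) (hunb j) (hcne_b j)
    have L4 : ∀ x, x ∈ B → (∀ j, x ≠ afun j) → ∀ i, G.Adj x (bfun i) →
        ∀ u, G.Adj x u → u ≠ c → (∀ j', u ≠ bfun j') → ∃ j, G.Adj u (afun j) := by
      intro x hxB hxa i hxbi u hxu hunec hunb
      obtain ⟨j, hji⟩ := pick1 i
      refine ⟨j, ?_⟩
      by_contra hnadj
      have huW : u ∈ W := memW_of hxB hxu
      have hnxbj : ¬G.Adj x (bfun j) := fun hh => hji (hC x hxB hxa j i hh hxbi)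
      exact mkS113 hS x (bfun i) u c (afun j) (bfun j)
        hxbi hxu ((fact1 i x hxbi.symm).symm) (hca j) (hab j)
        (nadjB hxB (haB j)) hnxbj (nadjW (hbW i) huW) (nadjW (hbW i) hcW)
        (fun hh => hnab j i hji hh.symm) (nadjW (hbW i) (hbW j)) (nadjW huW hcW)
        hnadj (nadjW huW (hbW j)) (hncb j)
        (hxa j) (hWBne (hbW j) hxB).symm (fun he => hunb i he.symm) (hcne_b i).symm
        (hane_b j i).symm (fun he => hji (hbinj he).symm) hunec (hWBne huW (haB j))
        (hunb j) (hcne_b j)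
    -- the three-part partition of W
    set Cs : Set V := insert c (Set.range bfun) with hCs
    set Xs : Set V := {u | u ∈ W ∧ u ≠ c ∧ (∀ i, u ≠ bfun i) ∧ ∃ i, G.Adj u (afun i)}
      with hXs
    set As : Set V := {u | u ∈ W ∧ u ≠ c ∧ (∀ i, u ≠ bfun i) ∧ ∀ i, ¬G.Adj u (afun i)}
      with hAs
    have hpart : Cs ∪ (Xs ∪ As) = W := by
      ext u
      constructor
      · rintro (h1 | h2 | h3)
        · rcases h1 with h1 | ⟨i, rfl⟩
          · exact h1 ▸ hcW
          · exact hbW i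
        · exact h2.1
        · exact h3.1
      · intro huW
        by_cases h1 : u = c
        · exact Or.inl (Or.inl h1)
        by_cases h2 : ∃ i, u = bfun i
        · obtain ⟨i, rfl⟩ := h2
          exact Or.inl (Or.inr ⟨i, rfl⟩)
        push_neg at h2
        by_cases h3 : ∃ i, G.Adj u (afun i)
        · exact Or.inr (Or.inl ⟨huW, h1, h2, h3⟩)
        · push_neg at h3
          exact Or.inr (Or.inr ⟨huW, h1, h2, h3⟩)
    have hd1 : Disjoint Cs (Xs ∪ As) := by
      rw [Set.disjoint_left]
      rintro u (h1 | ⟨i, rfl⟩) (h2 | h2)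
      · exact h2.2.1 h1
      · exact h2.2.1 h1
      · exact h2.2.2.1 i rfl
      · exact h2.2.2.1 i rfl
    have hd2 : Disjoint Xs As := by
      rw [Set.disjoint_left]
      rintro u h1 h2
      obtain ⟨i, hi⟩ := h1.2.2.2
      exact h2.2.2.2 i hi
    have hrangeb : (Set.range bfun).ncard = p+2 := by
      rw [← Set.image_univ, Set.ncard_image_of_injective _ hbinj, Set.ncard_univ,
        Nat.card_eq_fintype_card, Fintype.card_fin]
    have hcnotmem : c ∉ Set.range bfun := by
      rintro ⟨i, hi⟩
      exact hcne_b i hi.symm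
    have hCscard : Cs.ncard = p+3 := by
      rw [hCs, Set.ncard_insert_of_notMem hcnotmem, hrangeb]
    have hWcard : W.ncard = (p+3) + (Xs.ncard + As.ncard) := by
      rw [← hpart, Set.ncard_union_eq hd1, Set.ncard_union_eq hd2, hCscard]
    -- the X part is small, else K_{p,p}
    have hXsb : Xs.ncard + 2 ≤ p := by
      by_contra hcon
      push_neg at hcon
      have hfin : Xs.Finite := Set.toFinite _
      have hle : p - 1 ≤ hfin.toFinset.card := by
        rw [← Set.ncard_eq_toFinset_card Xs hfin]
        omega
      have uX : ∀ l : Fin (p-1),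
          ((hfin.toFinset.equivFin.symm ⟨l.val, by omega⟩ : hfin.toFinset) : V) ∈ Xs := by
        intro l
        have hmem := (hfin.toFinset.equivFin.symm ⟨l.val, by omega⟩).2
        exact (Set.Finite.mem_toFinset hfin).mp hmem
      set ufun : Fin (p-1) → V :=
        fun l => ((hfin.toFinset.equivFin.symm ⟨l.val, by omega⟩ : hfin.toFinset) : V)
        with hufun
      have huinj : Function.Injective ufun := by
        intro a b he
        have h2 := Subtype.coe_injective he
        have h3 := hfin.toFinset.equivFin.symm.injective h2
        have h4 := congrArg Fin.val h3
        exact Fin.ext (by simpa using h4)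
      refine mkKpp hDisj hIW hIB hK
        (fun i : Fin p => if i.val = 0 then c else ufun ⟨i.val - 1, by omega⟩)
        (fun j : Fin p => afun ⟨j.val, by omega⟩) ?_ ?_ ?_ ?_ ?_
      · intro a b he
        beta_reduce at he
        split_ifs at he with h1 h2 h3
        · exact Fin.ext (by omega)
        · exact absurd he.symm ((uX _).2.1)
        · exact absurd he ((uX _).2.1)
        · have h4 := congrArg Fin.val (huinj he)
          simp only at h4
          exact Fin.ext (by omega)
      · intro a b he
        have h4 := hφinj _ _ _ _ (hadef ▸ he)
        simp only at h4
        exact Fin.ext (by omega)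
      · intro i
        beta_reduce
        split_ifs with h1
        · exact hcW
        · exact (uX _).1
      · intro j
        exact haB _
      · intro i j
        beta_reduce
        split_ifs with h1
        · exact hca _
        · obtain ⟨i0, hi0⟩ := (uX ⟨i.val - 1, by omega⟩).2.2.2
          exact allA _ (uX _).1 (uX _).2.1 (uX _).2.2.1 i0 hi0 _
    -- the final expansion contradiction
    set Rs : Set V := Set.range afun ∪ Set.range dfun with hRs
    have hRsub : Rs ⊆ B := by
      rintro v (⟨i, rfl⟩ | ⟨i, rfl⟩)
      · exact haB i
      · exact hdB i
    have hrdisj : Disjoint (Set.range afun) (Set.range dfun) := by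
      rw [Set.disjoint_left]
      rintro v ⟨i, rfl⟩ ⟨j, hj⟩
      exact hdna' j i hj
    have hrangea : (Set.range afun).ncard = p+2 := by
      rw [← Set.image_univ, Set.ncard_image_of_injective _ hainj, Set.ncard_univ,
        Nat.card_eq_fintype_card, Fintype.card_fin]
    have hranged : (Set.range dfun).ncard = p+2 := by
      rw [← Set.image_univ, Set.ncard_image_of_injective _ hdinj, Set.ncard_univ,
        Nat.card_eq_fintype_card, Fintype.card_fin]
    have hRcard : Rs.ncard = (p+2)+(p+2) := by
      rw [hRs, Set.ncard_union_eq hrdisj, hrangea, hranged]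
    have hAW : As ⊆ W := fun u hu => hu.1
    have hBR : (B \ Rs).ncard + Rs.ncard = B.ncard :=
      Set.ncard_diff_add_ncard_of_subset hRsub
    have hRleB : Rs.ncard ≤ B.ncard := Set.ncard_le_ncard hRsub
    have hAne : As.Nonempty := Set.nonempty_of_ncard_ne_zero (by omega)
    have hexp := hExp As hAW hAne
    have hsub2 : NSet G As ∩ B ⊆ B \ Rs := by
      rintro v ⟨⟨u, huA, hadj⟩, hvB⟩
      refine ⟨hvB, ?_⟩
      rintro (⟨i, rfl⟩ | ⟨i, rfl⟩)
      · exact huA.2.2.2 i hadj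
      · obtain ⟨j, hj⟩ := L4 (dfun i) (hdB i) (hdna' i) i (hdb i).symm u hadj.symm
          huA.2.1 huA.2.2.1
        exact huA.2.2.2 j hj
    have hle2 : (NSet G As ∩ B).ncard ≤ (B \ Rs).ncard := Set.ncard_le_ncard hsub2
    omega
end

section
/- Let G be a finite S_{1,1,3}-free graph, let u be a vertex, let a_1, ..., a_k (k ≥ 4) be distinct neighbours of u forming an independent set, and let b_1, ..., b_k be vertices distinct from u and the a_i's such that {u, b_1, ..., b_k} contains no edge from u to any b_i, and for each i the vertex b_i is adjacent to a_i but non-adjacent to a_j for all j ≠ i. Then {b_1, ..., b_k} is an independent set, and consequently the subgraph induced by {u, a_1, ..., a_k, b_1, ..., b_k} is isomorphic to the simple tree T_k. -/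
open SimpleGraph

/-- In an `S_{1,1,3}`-free graph: if `u` has `k ≥ 4` distinct independent neighbours
`a_1, …, a_k`, and `b_1, …, b_k` are vertices distinct from `u` and the `a_j`'s,
non-adjacent to `u`, with `b_i` adjacent to `a_i` and non-adjacent to `a_j` for
`j ≠ i`, then the `b_i` are pairwise non-adjacent, and hence the subgraph induced by
`{u, a_1, …, a_k, b_1, …, b_k}` is isomorphic to the simple tree `T_k`. -/
theorem statement15 {V : Type} [Fintype V] (G : SimpleGraph V)
    (hfree : IsEmpty (S113 ↪g G))
    (k : ℕ) (hk : 4 ≤ k) (u : V) (a b : Fin k → V)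
    (ha_inj : Function.Injective a)
    (hua : ∀ i, G.Adj u (a i))
    (ha_ind : ∀ i j, i ≠ j → ¬ G.Adj (a i) (a j))
    (hb_ne_u : ∀ i, b i ≠ u) (hb_ne_a : ∀ i j, b i ≠ a j)
    (hub : ∀ i, ¬ G.Adj u (b i))
    (hab : ∀ i, G.Adj (a i) (b i))
    (hab' : ∀ i j, i ≠ j → ¬ G.Adj (a j) (b i)) :
    (∀ i j, i ≠ j → ¬ G.Adj (b i) (b j)) ∧
    ∃ φ : simpleTree k ↪g G,
      Set.range φ = {u} ∪ Set.range a ∪ Set.range b := by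
  -- adjacency table for S113
  have hS : ∀ v w : Fin 6, S113.Adj v w ↔
      ((v.val=0∧w.val=1)∨(v.val=1∧w.val=0)∨(v.val=0∧w.val=2)∨(v.val=2∧w.val=0)∨
       (v.val=0∧w.val=3)∨(v.val=3∧w.val=0)∨(v.val=3∧w.val=4)∨(v.val=4∧w.val=3)∨
       (v.val=4∧w.val=5)∨(v.val=5∧w.val=4)) := by
    simp only [S113, SimpleGraph.fromRel_adj]; decide
  -- Part 1: the `b i` are pairwise non-adjacent.
  have hbb : ∀ i j, i ≠ j → ¬ G.Adj (b i) (b j) := by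
    intro i j hij hadj
    have hcard : 1 < (({i, j}ᶜ : Finset (Fin k))).card := by
      have h1 : ({i, j} : Finset (Fin k)).card ≤ 2 :=
        Finset.card_insert_le _ _ |>.trans (by simp)
      have h2 : (({i, j}ᶜ : Finset (Fin k))).card
          = Fintype.card (Fin k) - ({i, j} : Finset (Fin k)).card :=
        Finset.card_compl _
      rw [h2, Fintype.card_fin]; omega
    obtain ⟨p, hp, q, hq, hpq⟩ := Finset.one_lt_card.mp hcard
    simp only [Finset.mem_compl, Finset.mem_insert, Finset.mem_singleton, not_or] at hp hq
    -- positive adjacencies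
    have h1 := hua p; have h2 := hua q; have h3 := hua i
    have h4 := hab i; have h5 := hadj
    have h1' := h1.symm; have h2' := h2.symm; have h3' := h3.symm
    have h4' := h4.symm; have h5' := h5.symm
    -- negative adjacencies
    have n1 := ha_ind p q hpq; have n2 := ha_ind p i hp.1; have n3 := ha_ind q i hq.1
    have n4 := hab' i p (Ne.symm hp.1); have n5 := hab' j p (Ne.symm hp.2)
    have n6 := hab' i q (Ne.symm hq.1); have n7 := hab' j q (Ne.symm hq.2)
    have n8 := hab' j i (Ne.symm hij)
    have n9 := hub i; have n10 := hub j
    have n1' : ¬ G.Adj (a q) (a p) := fun h => n1 h.symm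
    have n2' : ¬ G.Adj (a i) (a p) := fun h => n2 h.symm
    have n3' : ¬ G.Adj (a i) (a q) := fun h => n3 h.symm
    have n4' : ¬ G.Adj (b i) (a p) := fun h => n4 h.symm
    have n5' : ¬ G.Adj (b j) (a p) := fun h => n5 h.symm
    have n6' : ¬ G.Adj (b i) (a q) := fun h => n6 h.symm
    have n7' : ¬ G.Adj (b j) (a q) := fun h => n7 h.symm
    have n8' : ¬ G.Adj (b j) (a i) := fun h => n8 h.symm
    have n9' : ¬ G.Adj (b i) u := fun h => n9 h.symm
    have n10' : ¬ G.Adj (b j) u := fun h => n10 h.symm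
    have hirr : ∀ x : V, ¬ G.Adj x x := fun x => G.irrefl
    -- distinctness
    have d1 : u ≠ a p := h1.ne; have d2 : u ≠ a q := h2.ne; have d3 : u ≠ a i := h3.ne
    have d4 : u ≠ b i := (hb_ne_u i).symm; have d5 : u ≠ b j := (hb_ne_u j).symm
    have d6 : a p ≠ a q := fun h => hpq (ha_inj h)
    have d7 : a p ≠ a i := fun h => hp.1 (ha_inj h)
    have d8 : a q ≠ a i := fun h => hq.1 (ha_inj h)
    have d9 : a p ≠ b i := (hb_ne_a i p).symm; have d10 : a p ≠ b j := (hb_ne_a j p).symm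
    have d11 : a q ≠ b i := (hb_ne_a i q).symm; have d12 : a q ≠ b j := (hb_ne_a j q).symm
    have d13 : a i ≠ b i := (hb_ne_a i i).symm; have d14 : a i ≠ b j := (hb_ne_a j i).symm
    have d15 : b i ≠ b j := h5.ne
    have d1' := d1.symm; have d2' := d2.symm; have d3' := d3.symm
    have d4' := d4.symm; have d5' := d5.symm; have d6' := d6.symm
    have d7' := d7.symm; have d8' := d8.symm; have d9' := d9.symm
    have d10' := d10.symm; have d11' := d11.symm; have d12' := d12.symm
    have d13' := d13.symm; have d14' := d14.symm; have d15' := d15.symm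
    set g : Fin 6 → V := ![u, a p, a q, a i, b i, b j] with hg
    have e0 : g ⟨0, by omega⟩ = u := rfl
    have e1 : g ⟨1, by omega⟩ = a p := rfl
    have e2 : g ⟨2, by omega⟩ = a q := rfl
    have e3 : g ⟨3, by omega⟩ = a i := rfl
    have e4 : g ⟨4, by omega⟩ = b i := rfl
    have e5 : g ⟨5, by omega⟩ = b j := rfl
    have ginj : Function.Injective g := by
      intro v w
      fin_cases v <;> fin_cases w <;>
        simp only [e0, e1, e2, e3, e4, e5] <;>
        first
          | (intro _; trivial)
          | (intro h; exact absurd h (by assumption))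
    have hadj' : ∀ v w : Fin 6, G.Adj (g v) (g w) ↔ S113.Adj v w := by
      intro v w
      rw [hS]
      fin_cases v <;> fin_cases w <;>
        simp only [e0, e1, e2, e3, e4, e5] <;>
        norm_num <;>
        first
          | exact hirr _
          | assumption
    exact hfree.false ⟨⟨g, ginj⟩, (hadj' _ _)⟩
  refine ⟨hbb, ?_⟩
  have hb_inj : Function.Injective b := by
    intro i j hijb
    by_contra hne
    have h := hab j
    rw [← hijb] at h
    exact hab' i j hne h
  -- tree adjacency table at the level of values
  have hT : ∀ v w : Fin (2*k+1), (simpleTree k).Adj v w ↔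
      (v.val ≠ w.val ∧ ((v.val = 0 ∧ 1 ≤ w.val ∧ w.val ≤ k) ∨
        (1 ≤ v.val ∧ v.val ≤ k ∧ w.val = v.val + k) ∨
        (w.val = 0 ∧ 1 ≤ v.val ∧ v.val ≤ k) ∨
        (1 ≤ w.val ∧ w.val ≤ k ∧ v.val = w.val + k))) := by
    intro v w
    simp only [simpleTree, SimpleGraph.fromRel_adj, ne_eq, Fin.ext_iff]
    rw [or_assoc]
  -- the vertex map
  set f : Fin (2*k+1) → V := fun v =>
    if v.val = 0 then u
    else if h : v.val ≤ k then a ⟨v.val - 1, by omega⟩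
    else b ⟨v.val - k - 1, by have := v.isLt; omega⟩ with hfdef
  have f0 : ∀ v : Fin (2*k+1), v.val = 0 → f v = u := by
    intro v hv; simp only [hfdef]; exact if_pos hv
  have fa : ∀ (v : Fin (2*k+1)) (i : Fin k), v.val = i.val + 1 → f v = a i := by
    intro v i hv
    have h1 : i.val + 1 ≤ k := i.isLt
    simp only [hfdef]
    rw [if_neg (by omega), dif_pos (by omega)]
    congr 1
    exact Fin.ext (by simp only [Fin.val_mk]; omega)
  have fb : ∀ (v : Fin (2*k+1)) (i : Fin k), v.val = i.val + k + 1 → f v = b i := by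
    intro v i hv
    have h1 := i.isLt
    simp only [hfdef]
    rw [if_neg (by omega), dif_neg (by omega)]
    congr 1
    exact Fin.ext (by simp only [Fin.val_mk]; omega)
  have hclass : ∀ v : Fin (2*k+1), v.val = 0 ∨ (∃ i : Fin k, v.val = i.val + 1) ∨
      (∃ i : Fin k, v.val = i.val + k + 1) := by
    intro v
    have hv := v.isLt
    by_cases h0 : v.val = 0
    · exact Or.inl h0
    by_cases h1 : v.val ≤ k
    · exact Or.inr (Or.inl ⟨⟨v.val - 1, by omega⟩, by show v.val = v.val - 1 + 1; omega⟩)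
    · exact Or.inr (Or.inr ⟨⟨v.val - k - 1, by omega⟩,
        by show v.val = v.val - k - 1 + k + 1; omega⟩)
  have finj : Function.Injective f := by
    intro v w hvw
    rcases hclass v with hv | ⟨i, hv⟩ | ⟨i, hv⟩ <;>
      rcases hclass w with hw | ⟨j, hw⟩ | ⟨j, hw⟩
    · exact Fin.ext (by omega)
    · rw [f0 v hv, fa w j hw] at hvw
      exact absurd hvw (hua j).ne
    · rw [f0 v hv, fb w j hw] at hvw
      exact absurd hvw (hb_ne_u j).symm
    · rw [fa v i hv, f0 w hw] at hvw
      exact absurd hvw.symm (hua i).ne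
    · rw [fa v i hv, fa w j hw] at hvw
      have := ha_inj hvw
      exact Fin.ext (by rw [hv, hw, this])
    · rw [fa v i hv, fb w j hw] at hvw
      exact absurd hvw.symm (hb_ne_a j i)
    · rw [fb v i hv, f0 w hw] at hvw
      exact absurd hvw (hb_ne_u i)
    · rw [fb v i hv, fa w j hw] at hvw
      exact absurd hvw (hb_ne_a i j)
    · rw [fb v i hv, fb w j hw] at hvw
      have := hb_inj hvw
      exact Fin.ext (by rw [hv, hw, this])
  have hiff : ∀ v w : Fin (2*k+1), G.Adj (f v) (f w) ↔ (simpleTree k).Adj v w := by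
    intro v w
    rw [hT]
    rcases hclass v with hv | ⟨i, hv⟩ | ⟨i, hv⟩ <;>
      rcases hclass w with hw | ⟨j, hw⟩ | ⟨j, hw⟩
    · rw [f0 v hv, f0 w hw]
      exact iff_of_false (G.irrefl) (by omega)
    · rw [f0 v hv, fa w j hw]
      exact iff_of_true (hua j) (by have := j.isLt; omega)
    · rw [f0 v hv, fb w j hw]
      exact iff_of_false (hub j) (by have := j.isLt; omega)
    · rw [fa v i hv, f0 w hw]
      exact iff_of_true (hua i).symm (by have := i.isLt; omega)
    · rw [fa v i hv, fa w j hw]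
      refine iff_of_false ?_ (by have := i.isLt; have := j.isLt; omega)
      by_cases h : i = j
      · subst h
        have : v = w := Fin.ext (by omega)
        subst this
        exact G.irrefl
      · exact ha_ind i j h
    · rw [fa v i hv, fb w j hw]
      constructor
      · intro h
        by_cases hij : i = j
        · subst hij
          refine ⟨by omega, Or.inr (Or.inl ⟨by omega, by have := i.isLt; omega, by omega⟩)⟩
        · exact absurd h (hab' j i (Ne.symm hij))
      · rintro ⟨hne, hdisj⟩
        obtain rfl : i = j :=
          Fin.ext (by have := i.isLt; have := j.isLt; omega)
        exact hab i
    · rw [fb v i hv, f0 w hw]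
      exact iff_of_false (fun h => hub i h.symm) (by have := i.isLt; omega)
    · rw [fb v i hv, fa w j hw]
      constructor
      · intro h
        by_cases hij : i = j
        · subst hij
          refine ⟨by omega, Or.inr (Or.inr (Or.inr ⟨by omega, by have := i.isLt; omega, by omega⟩))⟩
        · exact absurd h.symm (hab' i j hij)
      · rintro ⟨hne, hdisj⟩
        obtain rfl : i = j :=
          Fin.ext (by have := i.isLt; have := j.isLt; omega)
        exact (hab i).symm
    · rw [fb v i hv, fb w j hw]
      refine iff_of_false ?_ (by have := i.isLt; have := j.isLt; omega)
      by_cases h : i = j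
      · subst h
        have : v = w := Fin.ext (by omega)
        subst this
        exact G.irrefl
      · exact hbb i j h
  refine ⟨⟨⟨f, finj⟩, fun {v w} => hiff v w⟩, ?_⟩
  show Set.range f = {u} ∪ Set.range a ∪ Set.range b
  ext x
  constructor
  · rintro ⟨v, rfl⟩
    rcases hclass v with hv | ⟨i, hv⟩ | ⟨i, hv⟩
    · rw [f0 v hv]
      exact Or.inl (Or.inl rfl)
    · rw [fa v i hv]
      exact Or.inl (Or.inr ⟨i, rfl⟩)
    · rw [fb v i hv]
      exact Or.inr ⟨i, rfl⟩
  · rintro ((rfl | ⟨i, rfl⟩) | ⟨i, rfl⟩)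
    · exact ⟨⟨0, by omega⟩, f0 _ rfl⟩
    · exact ⟨⟨i.val + 1, by have := i.isLt; omega⟩, fa _ i rfl⟩
    · exact ⟨⟨i.val + k + 1, by have := i.isLt; omega⟩, fb _ i rfl⟩
end
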